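/- The ideal (x_1², x_2² - x_1x_3, x_3² - x_2x_4, ..., x_{n-2}² - x_{n-3}x_{n-1}, x_{n-1}²) in k[x_1,...,x_n] has radical equal to (x_1,...,x_{n-1}), and hence has height n-1. -/

import Mathlib

open MvPolynomial
open scoped Classical

/-! ### Auxiliary lemmas on monomial ideals -/

open Classical in
noncomputable def killS {k : Type*} [Field k] {σ : Type*} (S : Set σ) :
    MvPolynomial σ k →ₐ[k] MvPolynomial σ k :=
  aeval (fun i => if i ∈ S then 0 else X i)

theorem mem_span_X_iff_killS {k : Type*} [Field k] {σ : Type*} (S : Set σ)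
    (p : MvPolynomial σ k) :
    p ∈ Ideal.span (X '' S : Set (MvPolynomial σ k)) ↔ killS S p = 0 := by
  constructor
  · intro hp
    have hle : Ideal.span (X '' S : Set (MvPolynomial σ k)) ≤ RingHom.ker (killS S).toRingHom := by
      rw [Ideal.span_le]
      rintro _ ⟨i, hi, rfl⟩
      simp [RingHom.mem_ker, killS, if_pos hi]
    exact hle hp
  · intro hp
    have key : ∀ q : MvPolynomial σ k,
        q - killS S q ∈ Ideal.span (X '' S : Set (MvPolynomial σ k)) := by
      intro q
      induction q using MvPolynomial.induction_on with
      | C a => simp [killS]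
      | add p q hp hq =>
        have := Ideal.add_mem _ hp hq
        convert this using 1
        simp [killS]
        ring
      | mul_X p i hp =>
        by_cases hi : i ∈ S
        · have hXi : X i ∈ Ideal.span (X '' S : Set (MvPolynomial σ k)) :=
            Ideal.subset_span ⟨i, hi, rfl⟩
          simp only [killS, map_mul, aeval_X, if_pos hi, mul_zero, sub_zero]
          exact Ideal.mul_mem_left _ p hXi
        · simp only [killS, map_mul, aeval_X, if_neg hi]
          have : p * X i - (aeval fun i => if i ∈ S then 0 else X i) p * X i
              = (p - killS S p) * X i := by simp [killS]; ring
          rw [this]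
          exact Ideal.mul_mem_right _ _ hp
    have := key p
    rwa [hp, sub_zero] at this

theorem isPrime_span_X {k : Type*} [Field k] {σ : Type*} (S : Set σ) :
    (Ideal.span (X '' S : Set (MvPolynomial σ k))).IsPrime := by
  constructor
  · intro h
    have : (1 : MvPolynomial σ k) ∈ Ideal.span (X '' S : Set (MvPolynomial σ k)) :=
      h ▸ Submodule.mem_top
    rw [mem_span_X_iff_killS] at this
    simp at this
  · intro x y hxy
    rw [mem_span_X_iff_killS] at hxy ⊢
    rw [mem_span_X_iff_killS]
    rw [map_mul] at hxy
    exact mul_eq_zero.mp hxy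

/-! ### The Coquand–Lombardi style chain collapsing lemma -/

theorem CLmain (k : Type*) [Field k] :
    ∀ (m : ℕ) (R : Type*) [CommRing R] [Algebra k R] (q : Fin (m + 1) → Ideal R)
      (_ : ∀ i, (q i).IsPrime) (_ : Monotone q) (f : Fin m → R)
      (_ : ∀ i : Fin m, f i ∈ q i.succ) (_ : ∀ i : Fin m, f i ∉ q i.castSucc)
      (Q : MvPolynomial (Fin m) k), Q ≠ 0 → aeval f Q ∈ q 0 → False := by
  intro m
  induction m with
  | zero =>
    intro R _ _ q hq _ f _ _ Q hQ h0
    obtain ⟨a, rfl⟩ := MvPolynomial.C_surjective (Fin 0) Q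
    have ha : a ≠ 0 := fun h => hQ (by simp [h])
    rw [aeval_C] at h0
    have : (q 0) = ⊤ := Ideal.eq_top_of_isUnit_mem _ h0
      ((algebraMap k R).isUnit_map (isUnit_iff_ne_zero.mpr ha))
    exact (hq 0).ne_top this
  | succ m ih =>
    intro R _ _ q hq hmono f hf1 hf2 Q hQ h0
    set e := MvPolynomial.finSuccEquiv k m with he
    set Qp : Polynomial (MvPolynomial (Fin m) k) := e Q with hQp
    have hQp0 : Qp ≠ 0 := fun h => hQ (by
      have := congrArg e.symm (h ▸ hQp)
      simpa using this.symm)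
    set j0 := Qp.natTrailingDegree with hj0
    obtain ⟨P₂, hP₂⟩ : (Polynomial.X : Polynomial (MvPolynomial (Fin m) k)) ^ j0 ∣ Qp := by
      rw [Polynomial.X_pow_dvd_iff]
      intro d hd
      exact Polynomial.coeff_eq_zero_of_lt_natTrailingDegree hd
    have hc0 : P₂.coeff 0 ≠ 0 := by
      have : Qp.coeff (0 + j0) = P₂.coeff 0 := by rw [hP₂, Polynomial.coeff_X_pow_mul]
      rw [zero_add] at this
      have ht : Qp.coeff j0 = Qp.trailingCoeff := rfl
      rw [ht] at this
      rw [← this]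
      exact fun h => hQp0 (Polynomial.trailingCoeff_eq_zero.mp h)
    set c := P₂.coeff 0 with hcdef
    set P₃ := P₂.divX with hP₃
    have hdecomp : Qp = Polynomial.X ^ j0 * (Polynomial.X * P₃ + Polynomial.C c) := by
      rw [hP₂, Polynomial.X_mul_divX_add]
    set u : MvPolynomial (Fin m) k →+* R :=
      (aeval (f ∘ Fin.succ) : MvPolynomial (Fin m) k →ₐ[k] R).toRingHom with hu
    have keyeval : ∀ (P : MvPolynomial (Fin (m+1)) k),
        aeval f P = Polynomial.eval (f 0) (Polynomial.map u (e P)) := by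
      intro P
      have : (aeval f : MvPolynomial (Fin (m+1)) k →ₐ[k] R).toRingHom =
          ((Polynomial.evalRingHom (f 0)).comp ((Polynomial.mapRingHom u).comp
            (e : MvPolynomial (Fin (m+1)) k ≃ₐ[k] _).toAlgHom.toRingHom)) := by
        apply MvPolynomial.ringHom_ext
        · intro r
          simp [u, e, MvPolynomial.finSuccEquiv_apply, Polynomial.algebraMap_eq]
        · intro i
          induction i using Fin.cases with
          | zero => simp [e, MvPolynomial.finSuccEquiv_X_zero]
          | succ j => simp [e, u, MvPolynomial.finSuccEquiv_X_succ]
      exact congrArg (fun g => g P) (congrArg DFunLike.coe this)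
    have heval : aeval f Q = (f 0) ^ j0 *
        ((f 0) * Polynomial.eval (f 0) (Polynomial.map u P₃) + u c) := by
      rw [keyeval Q, ← hQp, hdecomp]
      simp
    rw [heval] at h0
    have hf00 : f 0 ∉ q 0 := by
      have := hf2 0
      simpa using this
    have hstep1 : (f 0) * Polynomial.eval (f 0) (Polynomial.map u P₃) + u c ∈ q 0 := by
      rcases (hq 0).mem_or_mem h0 with h | h
      · exact ((hf00 ((hq 0).mem_of_pow_mem _ h)).elim)
      · exact h
    have hq01 : q 0 ≤ q 1 := hmono (by norm_num [Fin.le_def])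
    have hf01 : f 0 ∈ q 1 := by
      have := hf1 0
      simpa using this
    have hcq1 : u c ∈ q 1 := by
      have h1 : (f 0) * Polynomial.eval (f 0) (Polynomial.map u P₃) + u c ∈ q 1 := hq01 hstep1
      have h2 : (f 0) * Polynomial.eval (f 0) (Polynomial.map u P₃) ∈ q 1 :=
        Ideal.mul_mem_right _ _ hf01
      have := Ideal.sub_mem _ h1 h2
      simpa using this
    exact ih R (fun i => q i.succ) (fun i => hq i.succ)
      (fun i j hij => hmono (Fin.succ_le_succ_iff.mpr hij))
      (f ∘ Fin.succ)
      (fun i => hf1 i.succ)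
      (fun i => by
        have := hf2 i.succ
        rw [← Fin.succ_castSucc] at this
        exact this)
      c hc0 hcq1

/-! ### Any `n+1` polynomials in `n` variables admit an algebraic relation -/

theorem exists_annihilator {k : Type*} [Field k] (n : ℕ)
    (f : Fin (n + 1) → MvPolynomial (Fin n) k) :
    ∃ Q : MvPolynomial (Fin (n + 1)) k, Q ≠ 0 ∧ aeval f Q = 0 := by
  classical
  set D : ℕ := (Finset.univ.sup fun i => (f i).totalDegree) + 1 with hD
  have hD1 : 1 ≤ D := Nat.le_add_left 1 _
  set d : ℕ := (2 * (n + 1) * D) ^ n with hd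
  have hd1 : 1 ≤ d := Nat.one_le_pow _ _ (by positivity)
  set B : ℕ := (n + 1) * d * D with hB
  set v : (Fin (n + 1) → Fin (d + 1)) → MvPolynomial (Fin n) k :=
    fun α => ∏ i, f i ^ (α i : ℕ) with hv
  have hfD : ∀ i, (f i).totalDegree ≤ D := by
    intro i
    rw [hD]
    exact Nat.le_succ_of_le (Finset.le_sup (f := fun i => (f i).totalDegree) (Finset.mem_univ i))
  have hvdeg : ∀ α, (v α).totalDegree ≤ B := by
    intro α
    calc (v α).totalDegree ≤ ∑ i, ((f i) ^ (α i : ℕ)).totalDegree :=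
          totalDegree_finset_prod _ _
      _ ≤ ∑ i : Fin (n + 1), d * D := by
          apply Finset.sum_le_sum
          intro i _
          calc ((f i) ^ (α i : ℕ)).totalDegree ≤ (α i : ℕ) * (f i).totalDegree :=
                totalDegree_pow _ _
            _ ≤ d * D := by
                apply Nat.mul_le_mul
                · exact Nat.lt_succ_iff.mp (α i).isLt
                · exact hfD i
      _ = B := by simp [hB]; ring
  set T : Finset (MvPolynomial (Fin n) k) :=
    Finset.image (fun t : Fin n → Fin (B + 1) =>
      (monomial (Finsupp.equivFunOnFinite.symm fun j => ((t j : ℕ))) (1 : k))) Finset.univ with hT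
  set W : Submodule k (MvPolynomial (Fin n) k) :=
    Submodule.span k (T : Set (MvPolynomial (Fin n) k)) with hW
  have hmemW : ∀ p : MvPolynomial (Fin n) k, p.totalDegree ≤ B → p ∈ W := by
    intro p hp
    rw [← support_sum_monomial_coeff p]
    apply Submodule.sum_mem
    intro m hm
    have hmB : ∀ j, m j ≤ B := by
      intro j
      by_cases hj : j ∈ m.support
      · calc m j ≤ ∑ j' ∈ m.support, m j' :=
              Finset.single_le_sum (fun _ _ => Nat.zero_le _) hj
          _ = m.sum fun _ e => e := rfl
          _ ≤ p.totalDegree := MvPolynomial.le_totalDegree hm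
          _ ≤ B := hp
      · simp [Finsupp.notMem_support_iff.mp hj]
    have : monomial m (coeff m p) = (coeff m p) • monomial m (1 : k) := by
      rw [MvPolynomial.smul_monomial, smul_eq_mul, mul_one]
    rw [this]
    apply Submodule.smul_mem
    apply Submodule.subset_span
    set t : Fin n → Fin (B + 1) := fun j => ⟨m j, Nat.lt_succ_of_le (hmB j)⟩ with ht
    have hteq : (Finsupp.equivFunOnFinite.symm fun j => ((t j : ℕ))) = m := by
      apply Finsupp.ext
      intro j
      simp [ht, Finsupp.equivFunOnFinite]
    exact Finset.mem_coe.mpr (Finset.mem_image.mpr ⟨t, Finset.mem_univ _, by rw [hteq]⟩)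
  have hnli : ¬ LinearIndependent k v := by
    intro hli
    have : FiniteDimensional k W := FiniteDimensional.span_finset k T
    set v' : (Fin (n + 1) → Fin (d + 1)) → W := fun α => ⟨v α, hmemW _ (hvdeg α)⟩ with hv'
    have hli' : LinearIndependent k v' := by
      apply LinearIndependent.of_comp W.subtype
      exact hli
    have hcard := LinearIndependent.fintype_card_le_finrank hli'
    have hrank : Module.finrank k W ≤ T.card := finrank_span_finset_le_card T
    have hTcard : T.card ≤ (B + 1) ^ n := by
      calc T.card ≤ (Finset.univ : Finset (Fin n → Fin (B + 1))).card := Finset.card_image_le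
        _ = (B + 1) ^ n := by simp
    have hcount : (d + 1) ^ (n + 1) ≤ (B + 1) ^ n := by
      calc (d + 1) ^ (n + 1) = Fintype.card (Fin (n + 1) → Fin (d + 1)) := by simp
        _ ≤ Module.finrank k W := hcard
        _ ≤ T.card := hrank
        _ ≤ (B + 1) ^ n := hTcard
    have harith : (B + 1) ^ n < (d + 1) ^ (n + 1) := by
      have h1 : B + 1 ≤ 2 * (n + 1) * D * d := by
        have : 1 ≤ (n + 1) * d * D := Nat.one_le_iff_ne_zero.mpr (by positivity)
        calc B + 1 = (n + 1) * d * D + 1 := rfl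
          _ ≤ (n + 1) * d * D + (n + 1) * d * D := by omega
          _ = 2 * (n + 1) * D * d := by ring
      calc (B + 1) ^ n ≤ (2 * (n + 1) * D * d) ^ n := Nat.pow_le_pow_left h1 n
        _ = (2 * (n + 1) * D) ^ n * d ^ n := by rw [mul_pow]
        _ = d * d ^ n := by rw [hd]
        _ = d ^ (n + 1) := by ring
        _ < (d + 1) ^ (n + 1) := Nat.pow_lt_pow_left (Nat.lt_succ_self d) (Nat.succ_ne_zero n)
    omega
  rw [Fintype.not_linearIndependent_iff] at hnli
  obtain ⟨g, hrel, α₀, hα₀⟩ := hnli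
  set mexp : (Fin (n + 1) → Fin (d + 1)) → (Fin (n + 1) →₀ ℕ) :=
    fun α => Finsupp.equivFunOnFinite.symm fun i => ((α i : ℕ)) with hmexp
  have hmexp_inj : Function.Injective mexp := by
    intro α β hab
    funext i
    have := congrArg (fun (m : Fin (n + 1) →₀ ℕ) => m i) hab
    simp [hmexp, Finsupp.equivFunOnFinite] at this
    exact Fin.ext this
  refine ⟨∑ α, monomial (mexp α) (g α), ?_, ?_⟩
  · intro h
    have hc : coeff (mexp α₀) (∑ α, monomial (mexp α) (g α)) = g α₀ := by
      rw [MvPolynomial.coeff_sum]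
      rw [Finset.sum_eq_single α₀]
      · simp [coeff_monomial]
      · intro β _ hβ
        rw [coeff_monomial, if_neg]
        exact fun hc => hβ (hmexp_inj hc)
      · intro h; exact absurd (Finset.mem_univ _) h
    rw [h] at hc
    simp at hc
    exact hα₀ hc.symm
  · rw [map_sum]
    have : ∀ α, aeval f (monomial (mexp α) (g α)) = g α • v α := by
      intro α
      rw [aeval_monomial]
      rw [Finsupp.prod_fintype _ _ (fun i => pow_zero _)]
      rw [Algebra.smul_def]
      congr 1
    rw [Finset.sum_congr rfl (fun α _ => this α)]
    exact hrel

/-! ### No chains of primes longer than `n` in `k[x_1, …, x_n]` -/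

theorem no_long_chain {k : Type*} [Field k] (n : ℕ)
    (s : LTSeries (PrimeSpectrum (MvPolynomial (Fin n) k))) : s.length ≤ n := by
  by_contra hlen
  push_neg at hlen
  have hle : n + 2 ≤ s.length + 1 := by omega
  set q : Fin (n + 2) → Ideal (MvPolynomial (Fin n) k) :=
    fun i => (s (Fin.castLE hle i)).asIdeal with hq
  have hqmono : Monotone q := by
    intro i j hij
    exact (PrimeSpectrum.asIdeal_le_asIdeal _ _).mpr
      (s.monotone (show Fin.castLE hle i ≤ Fin.castLE hle j from by
        rw [Fin.le_def] at hij ⊢; exact hij))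
  have hqlt : ∀ i : Fin (n + 1), q i.castSucc < q i.succ := by
    intro i
    have : Fin.castLE hle i.castSucc < Fin.castLE hle i.succ := by
      simp [Fin.lt_def, Fin.castSucc_lt_succ_iff]
    have hlt := s.strictMono this
    exact lt_of_le_of_ne ((PrimeSpectrum.asIdeal_le_asIdeal _ _).mpr hlt.le)
      (fun h => hlt.ne (PrimeSpectrum.ext h))
  set f : Fin (n + 1) → MvPolynomial (Fin n) k :=
    fun i => (SetLike.exists_of_lt (hqlt i)).choose with hf
  have hf1 : ∀ i : Fin (n + 1), f i ∈ q i.succ :=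
    fun i => (SetLike.exists_of_lt (hqlt i)).choose_spec.1
  have hf2 : ∀ i : Fin (n + 1), f i ∉ q i.castSucc :=
    fun i => (SetLike.exists_of_lt (hqlt i)).choose_spec.2
  obtain ⟨Q, hQ, hQ0⟩ := exists_annihilator n f
  exact CLmain k (n + 1) (MvPolynomial (Fin n) k) q
    (fun i => (s (Fin.castLE hle i)).isPrime) hqmono f hf1 hf2 Q hQ (hQ0 ▸ Ideal.zero_mem _)


/-! ### Main theorem -/

/-- The height of an ideal: the infimum of the heights (in the prime spectrum)
of the primes containing it. -/
noncomputable def idealHeight {R : Type*} [CommRing R] (I : Ideal R) : ℕ∞ :=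
  ⨅ p ∈ {p : PrimeSpectrum R | I ≤ p.asIdeal}, Order.height p

/-- The generators `x_1², x_2²-x_1x_3, …, x_{n-2}²-x_{n-3}x_{n-1}, x_{n-1}²`
(0-based: indexed by `t : Fin (n-1)`, corresponding to `x_{t+1}`). -/
noncomputable def bGen (k : Type*) [Field k] (n : ℕ) (hn : 3 ≤ n) (t : Fin (n - 1)) :
    MvPolynomial (Fin n) k :=
  if t.1 = 0 then X (⟨0, by omega⟩ : Fin n) ^ 2
  else if t.1 = n - 2 then X (⟨n - 2, by omega⟩ : Fin n) ^ 2
  else X (⟨t.1, by have := t.isLt; omega⟩ : Fin n) ^ 2 -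
    X (⟨t.1 - 1, by have := t.isLt; omega⟩ : Fin n) *
    X (⟨t.1 + 1, by have := t.isLt; omega⟩ : Fin n)

theorem stmt5 (k : Type*) [Field k] (n : ℕ) (hn : 3 ≤ n) :
    (Ideal.span (Set.range (bGen k n hn))).radical =
      Ideal.span ((fun i : Fin n => (X i : MvPolynomial (Fin n) k)) ''
        {i : Fin n | (i : ℕ) < n - 1}) ∧
    idealHeight (Ideal.span (Set.range (bGen k n hn))) = (n - 1 : ℕ) := by
  classical
  set I : Ideal (MvPolynomial (Fin n) k) := Ideal.span (Set.range (bGen k n hn)) with hI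
  set S : Set (Fin n) := {i : Fin n | (i : ℕ) < n - 1} with hS
  have hJgoal : ((fun i : Fin n => (X i : MvPolynomial (Fin n) k)) '' S)
      = (X '' S : Set (MvPolynomial (Fin n) k)) := rfl
  set J : Ideal (MvPolynomial (Fin n) k) := Ideal.span (X '' S) with hJ
  have hJprime : J.IsPrime := isPrime_span_X S
  have hXmem : ∀ a : Fin n, (a : ℕ) < n - 1 → X a ∈ J :=
    fun a ha => Ideal.subset_span ⟨a, ha, rfl⟩
  -- I ≤ J
  have hIJ : I ≤ J := by
    rw [hI, Ideal.span_le]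
    rintro _ ⟨t, rfl⟩
    have htlt := t.isLt
    unfold bGen
    split_ifs with h1 h2
    · exact Ideal.pow_mem_of_mem J (hXmem _ (by simp only [Fin.val_mk]; omega)) 2 (by norm_num)
    · exact Ideal.pow_mem_of_mem J (hXmem _ (by simp only [Fin.val_mk]; omega)) 2 (by norm_num)
    · exact Ideal.sub_mem J
        (Ideal.pow_mem_of_mem J (hXmem _ (by simp only [Fin.val_mk]; omega)) 2 (by norm_num))
        (Ideal.mul_mem_right _ J (hXmem _ (by simp only [Fin.val_mk]; omega)))
  -- J ≤ radical I
  have hradIJ : I.radical = J := by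
    apply le_antisymm
    · calc I.radical ≤ J.radical := Ideal.radical_mono hIJ
        _ = J := hJprime.radical
    · rw [hJ, Ideal.span_le]
      rintro _ ⟨i, hi, rfl⟩
      have key : ∀ t : ℕ, ∀ htn : t < n, t < n - 1 →
          X (⟨t, htn⟩ : Fin n) ∈ I.radical := by
        intro t
        induction t using Nat.strong_induction_on with
        | _ t IH =>
          intro htn ht
          by_cases h0 : t = 0
          · subst h0
            have hb : bGen k n hn ⟨0, by omega⟩ = X (⟨0, htn⟩ : Fin n) ^ 2 := by
              simp [bGen]
            have hmem : X (⟨0, htn⟩ : Fin n) ^ 2 ∈ I :=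
              hb ▸ Ideal.subset_span (Set.mem_range_self _)
            exact Ideal.mem_radical_of_pow_mem (Ideal.le_radical hmem)
          by_cases h2 : t = n - 2
          · subst h2
            have hb : bGen k n hn ⟨n - 2, by omega⟩ = X (⟨n - 2, htn⟩ : Fin n) ^ 2 := by
              rw [bGen]
              rw [if_neg (show ¬(n - 2 = 0) by omega), if_pos rfl]
            have hmem : X (⟨n - 2, htn⟩ : Fin n) ^ 2 ∈ I :=
              hb ▸ Ideal.subset_span (Set.mem_range_self _)
            exact Ideal.mem_radical_of_pow_mem (Ideal.le_radical hmem)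
          · have hb : bGen k n hn ⟨t, by omega⟩ =
                X (⟨t, htn⟩ : Fin n) ^ 2 -
                  X (⟨t - 1, by omega⟩ : Fin n) * X (⟨t + 1, by omega⟩ : Fin n) := by
              rw [bGen]
              rw [if_neg (by simpa using h0), if_neg (by simpa using h2)]
            have hmem : X (⟨t, htn⟩ : Fin n) ^ 2 ∈ I.radical := by
              have heq : X (⟨t, htn⟩ : Fin n) ^ 2 = bGen k n hn ⟨t, by omega⟩ +
                  X (⟨t - 1, by omega⟩ : Fin n) * X (⟨t + 1, by omega⟩ : Fin n) := by
                rw [hb]; ring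
              rw [heq]
              exact Ideal.add_mem _
                (Ideal.le_radical (Ideal.subset_span (Set.mem_range_self _)))
                (Ideal.mul_mem_right _ _ (IH (t - 1) (by omega) (by omega) (by omega)))
            exact Ideal.mem_radical_of_pow_mem hmem
      have := key i.1 i.2 hi
      simpa using this
  refine ⟨by rw [← hradIJ], ?_⟩
  -- heights
  have hJle_of : ∀ p : PrimeSpectrum (MvPolynomial (Fin n) k),
      I ≤ p.asIdeal → J ≤ p.asIdeal := by
    intro p hp
    calc J = I.radical := hradIJ.symm
      _ ≤ p.asIdeal.radical := Ideal.radical_mono hp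
      _ = p.asIdeal := p.isPrime.radical
  set pt : Fin (n - 1 + 1) → PrimeSpectrum (MvPolynomial (Fin n) k) :=
    fun i => ⟨Ideal.span (X '' {j : Fin n | (j : ℕ) < (i : ℕ)}), isPrime_span_X _⟩ with hpt
  have hptmono : ∀ a b : Fin (n - 1 + 1), (a : ℕ) < (b : ℕ) → pt a < pt b := by
    intro a b hab
    have hle : Ideal.span (X '' {j : Fin n | (j : ℕ) < (a : ℕ)} :
          Set (MvPolynomial (Fin n) k)) ≤
        Ideal.span (X '' {j : Fin n | (j : ℕ) < (b : ℕ)}) :=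
      Ideal.span_mono (Set.image_mono (fun j hj => lt_trans hj hab))
    have han : (a : ℕ) < n := by have := a.isLt; omega
    have hne : pt a ≠ pt b := by
      intro h
      have hx : X (⟨(a : ℕ), han⟩ : Fin n) ∈
          Ideal.span (X '' {j : Fin n | (j : ℕ) < (b : ℕ)} :
            Set (MvPolynomial (Fin n) k)) :=
        Ideal.subset_span ⟨_, by simpa using hab, rfl⟩
      have hx2 : X (⟨(a : ℕ), han⟩ : Fin n) ∈
          Ideal.span (X '' {j : Fin n | (j : ℕ) < (a : ℕ)} :
            Set (MvPolynomial (Fin n) k)) := by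
        have : pt a = pt b := h
        have := congrArg PrimeSpectrum.asIdeal this
        simp only [hpt] at this
        rw [this]
        exact hx
      rw [mem_span_X_iff_killS] at hx2
      simp only [killS, aeval_X] at hx2
      rw [if_neg (by simp)] at hx2
      exact MvPolynomial.X_ne_zero _ hx2
    exact lt_of_le_of_ne ((PrimeSpectrum.asIdeal_le_asIdeal _ _).mp hle) hne
  set cser : LTSeries (PrimeSpectrum (MvPolynomial (Fin n) k)) :=
    ⟨n - 1, pt, fun i => hptmono _ _ (by simp)⟩ with hcser
  have hlast : cser.last = (⟨J, hJprime⟩ : PrimeSpectrum (MvPolynomial (Fin n) k)) := by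
    show pt (Fin.last (n - 1)) = _
    apply PrimeSpectrum.ext
    show Ideal.span (X '' {j : Fin n | (j : ℕ) < ((Fin.last (n - 1)) : ℕ)}) = J
    rw [hJ]
    congr 1
  -- lower bound
  have hlower : ∀ p : PrimeSpectrum (MvPolynomial (Fin n) k), I ≤ p.asIdeal →
      ((n - 1 : ℕ) : ℕ∞) ≤ Order.height p := by
    intro p hp
    have hlp : cser.last ≤ p := by
      rw [hlast]
      exact (PrimeSpectrum.asIdeal_le_asIdeal _ _).mp (hJle_of p hp)
    have := Order.length_le_height hlp
    exact this
  -- upper bound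
  have hupper : Order.height (⟨J, hJprime⟩ : PrimeSpectrum (MvPolynomial (Fin n) k)) ≤
      ((n - 1 : ℕ) : ℕ∞) := by
    rw [Order.height_le_iff]
    intro s hs
    set M : PrimeSpectrum (MvPolynomial (Fin n) k) :=
      ⟨Ideal.span (X '' (Set.univ : Set (Fin n))), isPrime_span_X _⟩ with hM
    have hJM : (⟨J, hJprime⟩ : PrimeSpectrum (MvPolynomial (Fin n) k)) < M := by
      have hle : J ≤ M.asIdeal := by
        rw [hJ]
        exact Ideal.span_mono (Set.image_mono (Set.subset_univ S))
      have hne : (⟨J, hJprime⟩ : PrimeSpectrum (MvPolynomial (Fin n) k)) ≠ M := by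
        intro h
        have hx : X (⟨n - 1, by omega⟩ : Fin n) ∈ M.asIdeal :=
          Ideal.subset_span ⟨_, Set.mem_univ _, rfl⟩
        have hJeq : J = M.asIdeal := congrArg PrimeSpectrum.asIdeal h
        have hx2 : X (⟨n - 1, by omega⟩ : Fin n) ∈ J := by rw [hJeq]; exact hx
        rw [hJ, mem_span_X_iff_killS] at hx2
        simp only [killS, aeval_X] at hx2
        rw [if_neg (by simp [hS])] at hx2
        exact MvPolynomial.X_ne_zero _ hx2
      exact lt_of_le_of_ne ((PrimeSpectrum.asIdeal_le_asIdeal _ _).mp hle) hne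
    have hslt : s.last < M := lt_of_le_of_lt hs hJM
    have hlen := no_long_chain n (s.snoc M hslt)
    simp only [RelSeries.snoc_length] at hlen
    exact_mod_cast Nat.cast_le.mpr (by omega : s.length ≤ n - 1)
  -- conclusion
  unfold idealHeight
  apply le_antisymm
  · exact le_trans
      (iInf₂_le (⟨J, hJprime⟩ : PrimeSpectrum (MvPolynomial (Fin n) k)) hIJ) hupper
  · exact le_iInf₂ hlower
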